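/- Let k₁, k₂ ∈ ℝ be constants with a = √(k₁² + k₂²) ≠ 0, and let γ, T, M₁, M₂ : ℝ → ℝ³ be differentiable functions satisfying the natural Frenet equations γ' = T, T' = k₁ M₁ + k₂ M₂, M₁' = −k₁ T, M₂' = −k₂ T, with (T(s), M₁(s), M₂(s)) an orthonormal frame for every s. Then γ traces a circle of radius 1/a: there exist a point c ∈ ℝ³ and a unit vector n ∈ ℝ³ such that |γ(s) − c| = 1/a and (γ(s) − c)·n = 0 for all s. -/

import Mathlib

open RealInnerProductSpace

/-- An orthonormal frame in ℝ³: an ordered triple of pairwise orthogonal unit vectors. -/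
def IsONFrame (x y z : EuclideanSpace ℝ (Fin 3)) : Prop :=
  ‖x‖ = 1 ∧ ‖y‖ = 1 ∧ ‖z‖ = 1 ∧ ⟪x, y⟫ = 0 ∧ ⟪x, z⟫ = 0 ∧ ⟪y, z⟫ = 0

theorem stmt17 (k₁ k₂ : ℝ) (ha : Real.sqrt (k₁ ^ 2 + k₂ ^ 2) ≠ 0)
    (γ T M₁ M₂ : ℝ → EuclideanSpace ℝ (Fin 3))
    (hframe : ∀ s, IsONFrame (T s) (M₁ s) (M₂ s))
    (hγ : ∀ s, HasDerivAt γ (T s) s)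
    (hT : ∀ s, HasDerivAt T (k₁ • M₁ s + k₂ • M₂ s) s)
    (hM₁ : ∀ s, HasDerivAt M₁ (-k₁ • T s) s)
    (hM₂ : ∀ s, HasDerivAt M₂ (-k₂ • T s) s) :
    ∃ c n : EuclideanSpace ℝ (Fin 3), ‖n‖ = 1 ∧
      ∀ s, ‖γ s - c‖ = 1 / Real.sqrt (k₁ ^ 2 + k₂ ^ 2) ∧ ⟪γ s - c, n⟫ = 0 := by
  set a := Real.sqrt (k₁ ^ 2 + k₂ ^ 2) with ha_def
  have hnn : (0:ℝ) ≤ k₁ ^ 2 + k₂ ^ 2 := by positivity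
  have ha2 : a ^ 2 = k₁ ^ 2 + k₂ ^ 2 := Real.sq_sqrt hnn
  have hapos : 0 < a := lt_of_le_of_ne (Real.sqrt_nonneg _) (Ne.symm ha)
  -- key inner product computation
  have key : ∀ (s : ℝ) (α β α' β' : ℝ),
      ⟪α • M₁ s + β • M₂ s, α' • M₁ s + β' • M₂ s⟫ = α * α' + β * β' := by
    intro s α β α' β'
    obtain ⟨-, h1, h2, -, -, h12⟩ := hframe s
    have e1 : ⟪M₁ s, M₁ s⟫ = 1 := by
      rw [real_inner_self_eq_norm_sq, h1]; norm_num
    have e2 : ⟪M₂ s, M₂ s⟫ = 1 := by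
      rw [real_inner_self_eq_norm_sq, h2]; norm_num
    have e21 : ⟪M₂ s, M₁ s⟫ = 0 := by rw [real_inner_comm]; exact h12
    simp [inner_add_left, inner_add_right, inner_smul_left, inner_smul_right,
      e1, e2, h12, e21, h1, h2]
    ring
  -- constant center
  set C : ℝ → EuclideanSpace ℝ (Fin 3) :=
    fun s => γ s + (a ^ 2)⁻¹ • (k₁ • M₁ s + k₂ • M₂ s) with hC
  have hCd : ∀ s, HasDerivAt C 0 s := by
    intro s
    have h := (hγ s).add ((((hM₁ s).const_smul k₁).add
      ((hM₂ s).const_smul k₂)).const_smul (a ^ 2)⁻¹)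
    refine h.congr_deriv ?_
    rw [smul_smul, smul_smul, ← add_smul, smul_smul]
    have hc : (a ^ 2)⁻¹ * (k₁ * -k₁ + k₂ * -k₂) = -1 := by
      have he : k₁ * -k₁ + k₂ * -k₂ = -(a ^ 2) := by rw [ha2]; ring
      rw [he, mul_neg, inv_mul_cancel₀ (pow_ne_zero 2 (ne_of_gt hapos))]
    rw [hc]
    simp
  -- constant normal direction
  set N : ℝ → EuclideanSpace ℝ (Fin 3) :=
    fun s => k₂ • M₁ s + (-k₁) • M₂ s with hN
  have hNd : ∀ s, HasDerivAt N 0 s := by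
    intro s
    have h := ((hM₁ s).const_smul k₂).add ((hM₂ s).const_smul (-k₁))
    refine h.congr_deriv ?_
    module
  have hCconst : ∀ s, C s = C 0 := fun s =>
    is_const_of_deriv_eq_zero (fun x => (hCd x).differentiableAt)
      (fun x => (hCd x).deriv) s 0
  have hNconst : ∀ s, N s = N 0 := fun s =>
    is_const_of_deriv_eq_zero (fun x => (hNd x).differentiableAt)
      (fun x => (hNd x).deriv) s 0
  refine ⟨C 0, a⁻¹ • N 0, ?_, ?_⟩
  · have : ⟪N 0, N 0⟫ = a ^ 2 := by rw [key]; rw [ha2]; ring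
    have hnorm : ‖N 0‖ = a := by
      rw [norm_eq_sqrt_real_inner, this, Real.sqrt_sq hapos.le]
    rw [norm_smul, hnorm, Real.norm_eq_abs, abs_of_pos (inv_pos.2 hapos)]
    exact inv_mul_cancel₀ (ne_of_gt hapos)
  · intro s
    have hgs : γ s - C 0 = (-(a ^ 2)⁻¹) • (k₁ • M₁ s + k₂ • M₂ s) := by
      rw [← hCconst s, hC]
      simp
      module
    constructor
    · rw [hgs, norm_smul]
      have hv : ‖k₁ • M₁ s + k₂ • M₂ s‖ = a := by
        rw [norm_eq_sqrt_real_inner, key,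
          show k₁ * k₁ + k₂ * k₂ = a ^ 2 by rw [ha2]; ring, Real.sqrt_sq hapos.le]
      rw [hv, Real.norm_eq_abs, abs_neg,
        abs_of_pos (inv_pos.2 (pow_pos hapos 2))]
      rw [one_div, sq, mul_inv, mul_assoc,
        inv_mul_cancel₀ (ne_of_gt hapos), mul_one]
    · rw [hgs, ← hNconst s, hN]
      rw [real_inner_smul_left, real_inner_smul_right, key]
      ring
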